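/- arXiv:1910.13384 — 2 statements merged into one kernel-verified Lean document; each statement's English description precedes it below -/
import Mathlib

section
/- Let P be a set of primes, R > 1 a real number, and ν a function on P with 1 ≤ ν(p) < p for all p ∈ P. Let y : ℕ → ℝ be supported on squarefree integers r < R all of whose prime factors lie in P. For squarefree d all of whose prime factors lie in P define λ_d = μ(d)·(∏_{p | d} p/ν(p))·∑_{r : d | r} y_r ∏_{p | r} ν(p)/(p − ν(p)), and set λ_d = 0 for all other d. Then ∑_{d,e} λ_d λ_e ∏_{p | d·e} ν(p)/p = ∑_r y_r² ∏_{p | r} ν(p)/(p − ν(p)), where all products are over primes. -/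
section SelbergAux
open ArithmeticFunction Finset
open scoped ArithmeticFunction.Moebius

-- L2: expansion of product over prime factors as sum over divisors
lemma aux_prod_one_add {f : ℕ → ℝ} {m : ℕ} (hm : Squarefree m) :
    ∏ p ∈ m.primeFactors, (1 + f p) = ∑ k ∈ m.divisors, ∏ p ∈ k.primeFactors, f p := by
  have h1 : ∏ p ∈ m.primeFactors, (1 + f p) = ∑ t ∈ m.primeFactors.powerset, ∏ p ∈ t, f p := by
    simp_rw [add_comm (1 : ℝ)]
    rw [Finset.prod_add]
    simp
  rw [h1]
  refine Finset.sum_nbij' (i := fun t => ∏ p ∈ t, p) (j := fun k => k.primeFactors) ?_ ?_ ?_ ?_ ?_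
  · intro t ht
    rw [Nat.mem_divisors]
    refine ⟨?_, hm.ne_zero⟩
    calc ∏ p ∈ t, p ∣ ∏ p ∈ m.primeFactors, p :=
          Finset.prod_dvd_prod_of_subset _ _ _ (Finset.mem_powerset.mp ht)
      _ = m := Nat.prod_primeFactors_of_squarefree hm
  · intro k hk
    exact Finset.mem_powerset.mpr (Nat.primeFactors_mono (Nat.mem_divisors.mp hk).1 hm.ne_zero)
  · intro t ht
    exact Nat.primeFactors_prod (fun p hp => Nat.prime_of_mem_primeFactors
      (Finset.mem_powerset.mp ht hp))
  · intro k hk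
    exact Nat.prod_primeFactors_of_squarefree
      (hm.squarefree_of_dvd (Nat.mem_divisors.mp hk).1)
  · intro t ht
    rw [Nat.primeFactors_prod (fun p hp => Nat.prime_of_mem_primeFactors
      (Finset.mem_powerset.mp ht hp))]

-- Möbius sum over divisors
lemma aux_moebius_sum (n : ℕ) (hn : n ≠ 0) :
    ∑ d ∈ n.divisors, (μ d : ℤ) = if n = 1 then 1 else 0 := by
  have := ArithmeticFunction.coe_mul_zeta_apply (f := (μ : ArithmeticFunction ℤ)) (x := n)
  rw [moebius_mul_coe_zeta] at this
  rw [← this, ArithmeticFunction.one_apply]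

-- L1: filtered Möbius sum
lemma aux_moebius_filter (k r : ℕ) (hr : Squarefree r) :
    ∑ d ∈ r.divisors.filter (k ∣ ·), (μ d : ℝ) = if k = r then (μ k : ℝ) else 0 := by
  by_cases hk : k ∣ r
  · have hr0 : r ≠ 0 := hr.ne_zero
    have hk0 : k ≠ 0 := by rintro rfl; exact hr0 (Nat.eq_zero_of_zero_dvd hk)
    have hmul : k * (r / k) = r := Nat.mul_div_cancel' hk
    have hrk0 : r / k ≠ 0 := by rintro h; rw [h, mul_zero] at hmul; exact hr0 hmul.symm
    have hsq : Squarefree (k * (r / k)) := by rwa [hmul]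
    obtain ⟨hcop, hks, hrks⟩ := Nat.squarefree_mul_iff.mp hsq
    have hbij : ∑ d ∈ r.divisors.filter (k ∣ ·), (μ d : ℝ)
        = ∑ e ∈ (r / k).divisors, (μ (k * e) : ℝ) := by
      refine Finset.sum_nbij' (i := fun d => d / k) (j := fun e => k * e) ?_ ?_ ?_ ?_ ?_
      · intro d hd
        rw [Finset.mem_filter, Nat.mem_divisors] at hd
        obtain ⟨⟨hdr, _⟩, hkd⟩ := hd
        obtain ⟨d', rfl⟩ := hkd
        simp only [Nat.mem_divisors]
        rw [Nat.mul_div_cancel_left _ (Nat.pos_of_ne_zero hk0)]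
        refine ⟨?_, hrk0⟩
        rw [← hmul] at hdr
        exact (mul_dvd_mul_iff_left hk0).mp hdr
      · intro e he
        rw [Nat.mem_divisors] at he
        rw [Finset.mem_filter, Nat.mem_divisors]
        exact ⟨⟨by rw [← hmul]; exact mul_dvd_mul_left k he.1, hr0⟩, dvd_mul_right k e⟩
      · intro d hd
        rw [Finset.mem_filter] at hd
        exact Nat.mul_div_cancel' hd.2
      · intro e he
        exact Nat.mul_div_cancel_left _ (Nat.pos_of_ne_zero hk0)
      · intro d hd
        rw [Finset.mem_filter] at hd
        rw [Nat.mul_div_cancel' hd.2]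
    rw [hbij]
    have hmu : ∀ e ∈ (r / k).divisors, (μ (k * e) : ℝ) = (μ k : ℝ) * (μ e : ℝ) := by
      intro e he
      have hce : Nat.Coprime k e := Nat.Coprime.coprime_dvd_right (Nat.mem_divisors.mp he).1 hcop
      rw [isMultiplicative_moebius.map_mul_of_coprime hce]
      push_cast
      ring
    rw [Finset.sum_congr rfl hmu, ← Finset.mul_sum]
    have : ∑ e ∈ (r / k).divisors, (μ e : ℝ) = if r / k = 1 then 1 else 0 := by
      have := aux_moebius_sum (r / k) hrk0
      have h2 : ((∑ d ∈ (r / k).divisors, (μ d : ℤ) : ℤ) : ℝ) = ((if r / k = 1 then 1 else 0 : ℤ) : ℝ) :=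
        congrArg _ this
      push_cast at h2
      exact h2
    rw [this]
    by_cases hrk1 : r / k = 1
    · have : k = r := by rw [← hmul, hrk1, mul_one]
      rw [if_pos hrk1, if_pos this, mul_one]
    · have : k ≠ r := by rintro rfl; exact hrk1 (Nat.div_self (Nat.pos_of_ne_zero hk0))
      rw [if_neg hrk1, if_neg this, mul_zero]
  · rw [Finset.filter_false_of_mem, Finset.sum_empty]
    · rw [if_neg]; rintro rfl; exact hk dvd_rfl
    · intro d hd hkd
      exact hk (hkd.trans (Nat.mem_divisors.mp hd).1)


end SelbergAux

open scoped ArithmeticFunction.Moebius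


open scoped Classical in
open ArithmeticFunction in
theorem selberg_sieve_diagonalization :
    ∀ (P : Set ℕ) (R : ℝ) (ν : ℕ → ℝ) (y lam : ℕ → ℝ),
    1 < R →
    (∀ p ∈ P, Nat.Prime p) →
    (∀ p ∈ P, 1 ≤ ν p ∧ ν p < (p : ℝ)) →
    -- y is supported on squarefree r < R with all prime factors in P
    (∀ r : ℕ, y r ≠ 0 → Squarefree r ∧ (r : ℝ) < R ∧ ∀ p : ℕ, p.Prime → p ∣ r → p ∈ P) →
    -- definition of λ
    (∀ d : ℕ, lam d = if Squarefree d ∧ (∀ p : ℕ, p.Prime → p ∣ d → p ∈ P) then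
        (ArithmeticFunction.moebius d : ℝ) * (∏ p ∈ d.primeFactors, (p : ℝ) / ν p) *
          ∑ r ∈ (Finset.range ⌈R⌉₊).filter (d ∣ ·),
            y r * ∏ p ∈ r.primeFactors, ν p / ((p : ℝ) - ν p)
      else 0) →
    -- diagonalization identity
    ∑ d ∈ Finset.range ⌈R⌉₊, ∑ e ∈ Finset.range ⌈R⌉₊,
        lam d * lam e * ∏ p ∈ (d * e).primeFactors, ν p / (p : ℝ) =
      ∑ r ∈ Finset.range ⌈R⌉₊, (y r) ^ 2 * ∏ p ∈ r.primeFactors, ν p / ((p : ℝ) - ν p) := by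
  classical
  intro P R ν y lam hR hP hν hy hlam
  set N := ⌈R⌉₊ with hN
  set g : ℕ → ℝ := fun r => ∏ p ∈ r.primeFactors, ν p / ((p : ℝ) - ν p) with hg
  set G : ℕ → ℝ := fun r => ∏ p ∈ r.primeFactors, ((p : ℝ) - ν p) / ν p with hG
  set S : ℕ → ℝ := fun d => ∑ r ∈ (Finset.range N).filter (d ∣ ·), y r * g r with hS
  set A : ℕ → ℝ := fun d => (μ d : ℝ) * S d with hA
  -- positivity facts
  have hνpos : ∀ p ∈ P, 0 < ν p ∧ 0 < (p : ℝ) - ν p := by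
    intro p hp
    obtain ⟨h1, h2⟩ := hν p hp
    exact ⟨lt_of_lt_of_le one_pos h1, by linarith⟩
  -- support of y
  have hy' : ∀ r : ℕ, y r ≠ 0 → r ∈ Finset.range N ∧ Squarefree r ∧
      (∀ p : ℕ, p.Prime → p ∣ r → p ∈ P) := by
    intro r hr
    obtain ⟨h1, h2, h3⟩ := hy r hr
    refine ⟨?_, h1, h3⟩
    rw [Finset.mem_range]
    exact_mod_cast lt_of_lt_of_le h2 (Nat.le_ceil R)
  -- Key per-pair identity
  have key : ∀ d ∈ Finset.range N, ∀ e ∈ Finset.range N,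
      lam d * lam e * ∏ p ∈ (d * e).primeFactors, ν p / (p : ℝ) =
      ∑ k ∈ Finset.range N, if k ∣ d ∧ k ∣ e then A d * A e * G k else 0 := by
    intro d hd e he
    have hAzero : ∀ f : ℕ, ¬(Squarefree f ∧ (∀ p : ℕ, p.Prime → p ∣ f → p ∈ P)) → A f = 0 := by
      intro f hcf
      by_cases hsq : Squarefree f
      · push_neg at hcf
        obtain ⟨p, hp, hpf, hpP⟩ := hcf hsq
        have hSf : S f = 0 := by
          apply Finset.sum_eq_zero
          intro r hr
          rw [Finset.mem_filter] at hr
          by_cases hyr : y r = 0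
          · rw [hyr, zero_mul]
          · exact absurd ((hy r hyr).2.2 p hp (hpf.trans hr.2)) hpP
        simp [hA, hSf]
      · simp [hA, moebius_eq_zero_of_not_squarefree hsq]
    by_cases hcd : Squarefree d ∧ (∀ p : ℕ, p.Prime → p ∣ d → p ∈ P)
    swap
    · rw [hlam d, if_neg hcd, zero_mul, zero_mul]
      symm; apply Finset.sum_eq_zero; intro k hk
      rw [hAzero d hcd]
      split <;> ring
    by_cases hce : Squarefree e ∧ (∀ p : ℕ, p.Prime → p ∣ e → p ∈ P)
    swap
    · rw [hlam e, if_neg hce, mul_zero, zero_mul]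
      symm; apply Finset.sum_eq_zero; intro k hk
      rw [hAzero e hce]
      split <;> ring
    obtain ⟨hdsq, hdP⟩ := hcd
    obtain ⟨hesq, heP⟩ := hce
    have hd0 : d ≠ 0 := hdsq.ne_zero
    have he0 : e ≠ 0 := hesq.ne_zero
    have hdPmem : ∀ p ∈ d.primeFactors, p ∈ P := fun p hp =>
      hdP p (Nat.prime_of_mem_primeFactors hp) (Nat.dvd_of_mem_primeFactors hp)
    have hePmem : ∀ p ∈ e.primeFactors, p ∈ P := fun p hp =>
      heP p (Nat.prime_of_mem_primeFactors hp) (Nat.dvd_of_mem_primeFactors hp)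
    have hiPmem : ∀ p ∈ d.primeFactors ∩ e.primeFactors, p ∈ P := fun p hp =>
      hdPmem p (Finset.mem_inter.mp hp).1
    have hfacts : ∀ p ∈ P, ν p ≠ 0 ∧ (p : ℝ) ≠ 0 := by
      intro p hp
      exact ⟨(hνpos p hp).1.ne', Nat.cast_ne_zero.mpr (hP p hp).pos.ne'⟩
    have hprod1 : ∀ s : Finset ℕ, (∀ p ∈ s, p ∈ P) →
        (∏ p ∈ s, (p : ℝ) / ν p) * (∏ p ∈ s, ν p / (p : ℝ)) = 1 := by
      intro s hs
      rw [← Finset.prod_mul_distrib]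
      apply Finset.prod_eq_one
      intro p hp
      obtain ⟨h1, h2⟩ := hfacts p (hs p hp)
      field_simp
    have hun : (d * e).primeFactors = d.primeFactors ∪ e.primeFactors :=
      Nat.primeFactors_mul hd0 he0
    have hint : (Nat.gcd d e).primeFactors = d.primeFactors ∩ e.primeFactors :=
      Nat.primeFactors_gcd hd0 he0
    have hpui := Finset.prod_union_inter (s₁ := d.primeFactors) (s₂ := e.primeFactors)
      (f := fun p => ν p / (p : ℝ))
    have hIne : (∏ p ∈ d.primeFactors ∩ e.primeFactors, ν p / (p : ℝ)) ≠ 0 := by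
      apply Finset.prod_ne_zero_iff.mpr
      intro p hp
      obtain ⟨h1, h2⟩ := hfacts p (hiPmem p hp)
      exact div_ne_zero h1 h2
    have hmain : (∏ p ∈ d.primeFactors, (p : ℝ) / ν p) *
        (∏ p ∈ e.primeFactors, (p : ℝ) / ν p) *
        (∏ p ∈ d.primeFactors ∪ e.primeFactors, ν p / (p : ℝ)) =
        ∏ p ∈ d.primeFactors ∩ e.primeFactors, (p : ℝ) / ν p := by
      apply mul_right_cancel₀ hIne
      have e1 := hprod1 d.primeFactors hdPmem
      have e2 := hprod1 e.primeFactors hePmem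
      have e3 := hprod1 (d.primeFactors ∩ e.primeFactors) hiPmem
      linear_combination (∏ p ∈ d.primeFactors, (p : ℝ) / ν p) *
          (∏ p ∈ e.primeFactors, (p : ℝ) / ν p) * hpui +
        (∏ p ∈ e.primeFactors, (p : ℝ) / ν p) *
          (∏ p ∈ e.primeFactors, ν p / (p : ℝ)) * e1 + e2 - e3
    have hgcdsq : Squarefree (Nat.gcd d e) := hdsq.squarefree_of_dvd (Nat.gcd_dvd_left d e)
    have hexp : (∏ p ∈ d.primeFactors ∩ e.primeFactors, (p : ℝ) / ν p) =
        ∑ k ∈ (Nat.gcd d e).divisors, G k := by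
      rw [← hint]
      have : ∀ p ∈ (Nat.gcd d e).primeFactors, (p : ℝ) / ν p = 1 + ((p : ℝ) - ν p) / ν p := by
        intro p hp
        have hpP : p ∈ P := hiPmem p (hint ▸ hp)
        obtain ⟨h1, _⟩ := hfacts p hpP
        field_simp
        ring
      rw [Finset.prod_congr rfl this]
      exact aux_prod_one_add (f := fun p => ((p : ℝ) - ν p) / ν p) hgcdsq
    have hdivset : (Nat.gcd d e).divisors
        = (Finset.range N).filter (fun k => k ∣ d ∧ k ∣ e) := by
      ext k
      rw [Nat.mem_divisors, Finset.mem_filter, Finset.mem_range]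
      constructor
      · intro ⟨h1, h2⟩
        have hkd : k ∣ d := h1.trans (Nat.gcd_dvd_left d e)
        have hke : k ∣ e := h1.trans (Nat.gcd_dvd_right d e)
        refine ⟨lt_of_le_of_lt (Nat.le_of_dvd (Nat.pos_of_ne_zero hd0) hkd)
          (Finset.mem_range.mp hd), hkd, hke⟩
      · intro ⟨h1, h2, h3⟩
        exact ⟨Nat.dvd_gcd h2 h3, Nat.gcd_ne_zero_left hd0⟩
    rw [hlam d, if_pos ⟨hdsq, hdP⟩, hlam e, if_pos ⟨hesq, heP⟩]
    have hgoal : ((μ d : ℝ) * (∏ p ∈ d.primeFactors, (p : ℝ) / ν p) * S d) *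
        ((μ e : ℝ) * (∏ p ∈ e.primeFactors, (p : ℝ) / ν p) * S e) *
        (∏ p ∈ (d * e).primeFactors, ν p / (p : ℝ)) =
        A d * A e * ∑ k ∈ (Nat.gcd d e).divisors, G k := by
      rw [hun, ← hexp, hA]
      simp only []
      linear_combination (μ d : ℝ) * S d * (μ e : ℝ) * S e * hmain
    rw [hS] at hgoal
    rw [hgoal, hdivset, Finset.sum_filter, Finset.mul_sum]
    apply Finset.sum_congr rfl
    intro k hk
    split <;> ring
  -- value of the diagonal sum T
  have hT : ∀ k ∈ Finset.range N,
      (∑ d ∈ Finset.range N, if k ∣ d then A d else 0) = (μ k : ℝ) * y k * g k := by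
    intro k hk
    have step1 : ∀ d : ℕ, (if k ∣ d then A d else 0) =
        ∑ r ∈ Finset.range N, if k ∣ d ∧ d ∣ r then (μ d : ℝ) * (y r * g r) else 0 := by
      intro d
      by_cases hkd : k ∣ d
      · simp only [if_pos hkd, hkd, true_and, hA, hS]
        rw [Finset.sum_filter, Finset.mul_sum]
        apply Finset.sum_congr rfl
        intro r hr
        split <;> ring
      · simp [hkd]
    rw [Finset.sum_congr rfl (fun d _ => step1 d), Finset.sum_comm]
    have step2 : ∀ r ∈ Finset.range N,
        (∑ d ∈ Finset.range N, if k ∣ d ∧ d ∣ r then (μ d : ℝ) * (y r * g r) else 0) =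
        if k = r then (μ k : ℝ) * y r * g r else 0 := by
      intro r hr
      by_cases hyr : y r = 0
      · rw [hyr]
        simp only [zero_mul, mul_zero]
        rw [Finset.sum_eq_zero (fun d _ => by split <;> rfl)]
        split <;> ring
      · obtain ⟨hrmem, hrsq, hrP⟩ := hy' r hyr
        have hfilt : (Finset.range N).filter (fun d => k ∣ d ∧ d ∣ r)
            = r.divisors.filter (k ∣ ·) := by
          ext d
          rw [Finset.mem_filter, Finset.mem_filter, Finset.mem_range, Nat.mem_divisors]
          constructor
          · intro ⟨h1, h2, h3⟩
            exact ⟨⟨h3, hrsq.ne_zero⟩, h2⟩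
          · intro ⟨⟨h1, h2⟩, h3⟩
            exact ⟨lt_of_le_of_lt (Nat.le_of_dvd (Nat.pos_of_ne_zero hrsq.ne_zero) h1)
              (Finset.mem_range.mp hrmem), h3, h1⟩
        have hsum : (∑ d ∈ Finset.range N, if k ∣ d ∧ d ∣ r then (μ d : ℝ) * (y r * g r) else 0)
            = (∑ d ∈ (Finset.range N).filter (fun d => k ∣ d ∧ d ∣ r), (μ d : ℝ)) *
              (y r * g r) := by
          rw [Finset.sum_filter, Finset.sum_mul]
          apply Finset.sum_congr rfl
          intro d hd
          split <;> ring
        rw [hsum, hfilt, aux_moebius_filter k r hrsq]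
        split <;> ring
    rw [Finset.sum_congr rfl step2]
    rw [Finset.sum_ite_eq (Finset.range N) k (fun r => (μ k : ℝ) * y r * g r), if_pos hk]
  calc ∑ d ∈ Finset.range N, ∑ e ∈ Finset.range N,
        lam d * lam e * ∏ p ∈ (d * e).primeFactors, ν p / (p : ℝ)
      = ∑ k ∈ Finset.range N, G k *
          (∑ d ∈ Finset.range N, if k ∣ d then A d else 0) *
          (∑ e ∈ Finset.range N, if k ∣ e then A e else 0) := by
        rw [Finset.sum_congr rfl (fun d hd => Finset.sum_congr rfl (fun e he => key d hd e he))]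
        rw [Finset.sum_congr rfl (fun d _ => Finset.sum_comm), Finset.sum_comm]
        apply Finset.sum_congr rfl
        intro k _
        have hsplit : ∀ d e : ℕ, (if k ∣ d ∧ k ∣ e then A d * A e * G k else 0) =
            (if k ∣ d then A d else 0) * (if k ∣ e then A e else 0) * G k := by
          intro d e
          by_cases h1 : k ∣ d <;> by_cases h2 : k ∣ e <;> simp [h1, h2]
        rw [Finset.sum_congr rfl (fun d _ => Finset.sum_congr rfl (fun e _ => hsplit d e))]
        rw [Finset.sum_congr rfl (fun d _ => (Finset.sum_mul _ _ _).symm)]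
        rw [← Finset.sum_mul, ← Finset.sum_mul_sum]
        ring
    _ = ∑ r ∈ Finset.range N, (y r) ^ 2 * g r := by
        apply Finset.sum_congr rfl
        intro k hk
        rw [hT k hk]
        by_cases hyk : y k = 0
        · rw [hyk]; ring
        · obtain ⟨_, hksq, hkP⟩ := hy' k hyk
          have hm2 : (μ k : ℝ) ^ 2 = 1 := by
            have := moebius_sq_eq_one_of_squarefree hksq
            exact_mod_cast congrArg (fun z : ℤ => (z : ℝ)) this
          have hGg : G k * g k = 1 := by
            rw [hG, hg]
            simp only []
            rw [← Finset.prod_mul_distrib]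
            apply Finset.prod_eq_one
            intro p hp
            have hpP : p ∈ P := hkP p (Nat.prime_of_mem_primeFactors hp)
              (Nat.dvd_of_mem_primeFactors hp)
            obtain ⟨h1, h2⟩ := hνpos p hpP
            field_simp
          linear_combination (y k ^ 2 * g k ^ 2 * G k) * hm2 + y k ^ 2 * g k * hGg
end

section
/- Let P be a set of primes, R > 1 a real number, and ν a function on P with 1 ≤ ν(p) < p for all p ∈ P. Let y : ℕ → ℝ be supported on squarefree integers s < R all of whose prime factors lie in P, define λ_d = μ(d)·(∏_{p | d} p/ν(p))·∑_{s : d | s} y_s ∏_{p | s} ν(p)/(p − ν(p)) for squarefree d with prime factors in P (λ_d = 0 otherwise), and define y*_r = μ(r)·(∏_{p | r} (p − ν(p))/(ν(p) − 1))·∑_{d : r | d} λ_d ∏_{p | d} (ν(p) − 1)/(p − 1) for squarefree r < R all of whose prime factors p lie in P and satisfy ν(p) ≥ 2. Then for every such r one has y*_r = r·∑_{s : r | s} y_s/φ(s). -/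
open ArithmeticFunction ArithmeticFunction.Moebius in
lemma gpy_musum (f : ℕ → ℝ) {t : ℕ} (ht : Squarefree t) :
    ∑ e ∈ t.divisors, (μ e : ℝ) * ∏ p ∈ e.primeFactors, f p
      = ∏ p ∈ t.primeFactors, (1 - f p) := by
  have h := ArithmeticFunction.IsMultiplicative.prodPrimeFactors_one_sub_of_squarefree
      (ArithmeticFunction.prodPrimeFactors f)
      (ArithmeticFunction.IsMultiplicative.prodPrimeFactors f) ht
  calc ∑ e ∈ t.divisors, (μ e : ℝ) * ∏ p ∈ e.primeFactors, f p
      = ∑ e ∈ t.divisors, (μ e : ℝ) * (ArithmeticFunction.prodPrimeFactors f) e := by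
        refine Finset.sum_congr rfl fun e he => ?_
        rw [ArithmeticFunction.prodPrimeFactors_apply (Nat.pos_of_mem_divisors he).ne']
    _ = ∏ p ∈ t.primeFactors, (1 - (ArithmeticFunction.prodPrimeFactors f) p) := h.symm
    _ = ∏ p ∈ t.primeFactors, (1 - f p) := by
        refine Finset.prod_congr rfl fun p hp => ?_
        have hp' := Nat.prime_of_mem_primeFactors hp
        rw [ArithmeticFunction.prodPrimeFactors_apply hp'.ne_zero, hp'.primeFactors,
          Finset.prod_singleton]

lemma gpy_tot {s : ℕ} (hs : Squarefree s) :
    (s.totient : ℝ) = ∏ p ∈ s.primeFactors, ((p : ℝ) - 1) := by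
  rw [Nat.totient_eq_prod_factorization hs.ne_zero]
  rw [Finsupp.prod, Nat.support_factorization]
  push_cast
  refine Finset.prod_congr rfl fun p hp => ?_
  have hp' := Nat.prime_of_mem_primeFactors hp
  rw [Nat.factorization_eq_one_of_squarefree hs hp' (Nat.dvd_of_mem_primeFactors hp)]
  rw [Nat.cast_sub hp'.one_le]
  simp

open scoped Classical in
open ArithmeticFunction ArithmeticFunction.Moebius in
lemma gpy_shift (f : ℕ → ℝ) {r s : ℕ} (hs : Squarefree s) (hrs : r ∣ s) :
    ∑ d ∈ s.divisors.filter (r ∣ ·), (μ d : ℝ) * ∏ p ∈ d.primeFactors, f p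
      = (μ r : ℝ) * (∏ p ∈ r.primeFactors, f p) *
        ∏ p ∈ s.primeFactors \ r.primeFactors, (1 - f p) := by
  obtain ⟨t, rfl⟩ := hrs
  have hs0 : r * t ≠ 0 := hs.ne_zero
  have hr0 : r ≠ 0 := fun h => hs0 (by simp [h])
  have ht0 : t ≠ 0 := fun h => hs0 (by simp [h])
  have hco : Nat.Coprime r t := (Nat.squarefree_mul_iff.mp hs).1
  have hsft : Squarefree t := (Nat.squarefree_mul_iff.mp hs).2.2
  have hkey : ∑ d ∈ (r * t).divisors.filter (r ∣ ·),
        (μ d : ℝ) * ∏ p ∈ d.primeFactors, f p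
      = ∑ e ∈ t.divisors, (μ (r * e) : ℝ) * ∏ p ∈ (r * e).primeFactors, f p := by
    refine (Finset.sum_nbij' (i := fun e => r * e) (j := fun d => d / r) ?_ ?_ ?_ ?_ ?_).symm
    · intro e he
      rw [Finset.mem_filter, Nat.mem_divisors]
      exact ⟨⟨mul_dvd_mul_left r (Nat.dvd_of_mem_divisors he), hs0⟩, dvd_mul_right r e⟩
    · intro d hd
      rw [Finset.mem_filter, Nat.mem_divisors] at hd
      obtain ⟨⟨hds, _⟩, u, rfl⟩ := hd
      rw [Nat.mul_div_cancel_left u (Nat.pos_of_ne_zero hr0), Nat.mem_divisors]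
      exact ⟨(mul_dvd_mul_iff_left hr0).mp hds, ht0⟩
    · intro e _; exact Nat.mul_div_cancel_left e (Nat.pos_of_ne_zero hr0)
    · intro d hd
      rw [Finset.mem_filter] at hd
      exact Nat.mul_div_cancel' hd.2
    · intro e _; rfl
  rw [hkey]
  have hterm : ∀ e ∈ t.divisors, (μ (r * e) : ℝ) * ∏ p ∈ (r * e).primeFactors, f p
      = ((μ r : ℝ) * ∏ p ∈ r.primeFactors, f p) *
        ((μ e : ℝ) * ∏ p ∈ e.primeFactors, f p) := by
    intro e he
    have hcoe : Nat.Coprime r e := Nat.Coprime.coprime_dvd_right (Nat.dvd_of_mem_divisors he) hco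
    rw [isMultiplicative_moebius.map_mul_of_coprime hcoe, hcoe.primeFactors_mul,
      Finset.prod_union hcoe.disjoint_primeFactors]
    push_cast
    ring
  rw [Finset.sum_congr rfl hterm, ← Finset.mul_sum, gpy_musum f hsft]
  have hpf : (r * t).primeFactors \ r.primeFactors = t.primeFactors := by
    rw [hco.primeFactors_mul, Finset.union_sdiff_cancel_left hco.disjoint_primeFactors]
  rw [hpf]

set_option maxHeartbeats 1000000 in
open scoped Classical in
open ArithmeticFunction ArithmeticFunction.Moebius in
theorem gpy_sieve_ystar_in_terms_of_y :
    ∀ (P : Set ℕ) (R : ℝ) (ν : ℕ → ℝ) (y lam ystar : ℕ → ℝ),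
    1 < R →
    (∀ p ∈ P, Nat.Prime p) →
    (∀ p ∈ P, 1 ≤ ν p ∧ ν p < (p : ℝ)) →
    -- y is supported on squarefree s < R with all prime factors in P
    (∀ s : ℕ, y s ≠ 0 → Squarefree s ∧ (s : ℝ) < R ∧ ∀ p : ℕ, p.Prime → p ∣ s → p ∈ P) →
    -- definition of λ from y
    (∀ d : ℕ, lam d = if Squarefree d ∧ (∀ p : ℕ, p.Prime → p ∣ d → p ∈ P) then
        (μ d : ℝ) * (∏ p ∈ d.primeFactors, (p : ℝ) / ν p) *
          ∑ s ∈ (Finset.range ⌈R⌉₊).filter (d ∣ ·),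
            y s * ∏ p ∈ s.primeFactors, ν p / ((p : ℝ) - ν p)
      else 0) →
    -- definition of y* from λ
    (∀ r : ℕ, ystar r =
      if Squarefree r ∧ (r : ℝ) < R ∧ (∀ p : ℕ, p.Prime → p ∣ r → p ∈ P ∧ 2 ≤ ν p) then
        (μ r : ℝ) * (∏ p ∈ r.primeFactors, ((p : ℝ) - ν p) / (ν p - 1)) *
          ∑ d ∈ (Finset.range ⌈R⌉₊).filter (r ∣ ·),
            lam d * ∏ p ∈ d.primeFactors, (ν p - 1) / ((p : ℝ) - 1)
      else 0) →
    -- conclusion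
    ∀ r : ℕ, Squarefree r → (r : ℝ) < R → (∀ p : ℕ, p.Prime → p ∣ r → p ∈ P ∧ 2 ≤ ν p) →
      ystar r = (r : ℝ) * ∑ s ∈ (Finset.range ⌈R⌉₊).filter (r ∣ ·),
        y s / (Nat.totient s : ℝ) := by
  intro P R ν y lam ystar hR hPp hν hy hlam hstar r hr hrR hrP
  set N := ⌈R⌉₊ with hN
  set F : ℕ → ℝ := fun s => y s * ∏ p ∈ s.primeFactors, ν p / ((p : ℝ) - ν p) with hF
  set f : ℕ → ℝ := fun p => (p : ℝ) / ν p * ((ν p - 1) / ((p : ℝ) - 1)) with hf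
  -- λ without the if
  have hlam' : ∀ d : ℕ, lam d = (μ d : ℝ) * (∏ p ∈ d.primeFactors, (p : ℝ) / ν p) *
      ∑ s ∈ (Finset.range N).filter (d ∣ ·), F s := by
    intro d
    rw [hlam d]
    split_ifs with h
    · rfl
    · symm
      have hz : ∑ s ∈ (Finset.range N).filter (d ∣ ·), F s = 0 := by
        refine Finset.sum_eq_zero fun s hsmem => ?_
        rw [Finset.mem_filter] at hsmem
        by_cases hys : y s = 0
        · simp [hF, hys]
        · exfalso
          obtain ⟨hsf, _, hsP⟩ := hy s hys
          exact h ⟨hsf.squarefree_of_dvd hsmem.2,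
            fun p hp hpd => hsP p hp (hpd.trans hsmem.2)⟩
      rw [hz, mul_zero]
  rw [hstar r, if_pos ⟨hr, hrR, hrP⟩]
  -- expand λ and swap sums
  have hswap : ∑ d ∈ (Finset.range N).filter (r ∣ ·),
        lam d * ∏ p ∈ d.primeFactors, (ν p - 1) / ((p : ℝ) - 1)
      = ∑ s ∈ Finset.range N, ∑ d ∈ Finset.range N,
          (if r ∣ d ∧ d ∣ s then ((μ d : ℝ) * ∏ p ∈ d.primeFactors, f p) * F s else 0) := by
    rw [Finset.sum_filter]
    have step1 : ∑ d ∈ Finset.range N,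
          (if r ∣ d then lam d * ∏ p ∈ d.primeFactors, (ν p - 1) / ((p : ℝ) - 1) else 0)
        = ∑ d ∈ Finset.range N, ∑ s ∈ Finset.range N,
            (if r ∣ d ∧ d ∣ s then ((μ d : ℝ) * ∏ p ∈ d.primeFactors, f p) * F s else 0) := by
      refine Finset.sum_congr rfl fun d _ => ?_
      by_cases hrd : r ∣ d
      · rw [if_pos hrd]
        rw [hlam' d, Finset.sum_filter, Finset.mul_sum, Finset.sum_mul]
        refine Finset.sum_congr rfl fun s _ => ?_
        simp only [hrd, true_and]
        split_ifs with hds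
        · simp only [hf]
          rw [Finset.prod_mul_distrib]
          ring
        · ring
      · rw [if_neg hrd]
        symm
        exact Finset.sum_eq_zero fun s _ => if_neg (fun h => hrd h.1)
    rw [step1, Finset.sum_comm]
  rw [hswap, Finset.mul_sum]
  have hRHS : (r : ℝ) * ∑ s ∈ (Finset.range N).filter (r ∣ ·), y s / (Nat.totient s : ℝ)
      = ∑ s ∈ Finset.range N, (if r ∣ s then (r : ℝ) * (y s / (Nat.totient s : ℝ)) else 0) := by
    rw [Finset.sum_filter, Finset.mul_sum]
    refine Finset.sum_congr rfl fun s _ => ?_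
    split_ifs <;> ring
  rw [hRHS]
  refine Finset.sum_congr rfl fun s hsmem => ?_
  rw [Finset.mem_range] at hsmem
  by_cases hys : y s = 0
  · simp [hF, hys]
  obtain ⟨hsf, hsR, hsP⟩ := hy s hys
  have hs0 : s ≠ 0 := hsf.ne_zero
  by_cases hrs : r ∣ s
  swap
  · rw [if_neg hrs]
    rw [Finset.sum_eq_zero, mul_zero]
    intro d _
    rw [if_neg]
    rintro ⟨h1, h2⟩
    exact hrs (h1.trans h2)
  rw [if_pos hrs]
  have hset : (Finset.range N).filter (fun d => r ∣ d ∧ d ∣ s) = s.divisors.filter (r ∣ ·) := by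
    ext d
    simp only [Finset.mem_filter, Finset.mem_range, Nat.mem_divisors]
    constructor
    · rintro ⟨_, h1, h2⟩; exact ⟨⟨h2, hs0⟩, h1⟩
    · rintro ⟨⟨h2, _⟩, h1⟩
      exact ⟨lt_of_le_of_lt (Nat.le_of_dvd (Nat.pos_of_ne_zero hs0) h2) hsmem, h1, h2⟩
  have hsum2 : ∑ d ∈ Finset.range N,
        (if r ∣ d ∧ d ∣ s then ((μ d : ℝ) * ∏ p ∈ d.primeFactors, f p) * F s else 0)
      = (∑ d ∈ s.divisors.filter (r ∣ ·), (μ d : ℝ) * ∏ p ∈ d.primeFactors, f p) * F s := by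
    rw [← Finset.sum_filter, hset, Finset.sum_mul]
  rw [hsum2, gpy_shift f hsf hrs]
  -- final computation
  have hsub : r.primeFactors ⊆ s.primeFactors := Nat.primeFactors_mono hrs hs0
  have hμ : (μ r : ℝ) * (μ r : ℝ) = 1 := by
    rw [ArithmeticFunction.moebius_apply_of_squarefree hr]
    push_cast
    rw [← pow_add, ← two_mul, pow_mul]
    norm_num
  have hsplit : ∏ p ∈ s.primeFactors, ν p / ((p : ℝ) - ν p)
      = (∏ p ∈ s.primeFactors \ r.primeFactors, ν p / ((p : ℝ) - ν p)) *
        ∏ p ∈ r.primeFactors, ν p / ((p : ℝ) - ν p) := (Finset.prod_sdiff hsub).symm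
  have key1 : (∏ p ∈ r.primeFactors, ((p : ℝ) - ν p) / (ν p - 1)) *
      ((∏ p ∈ r.primeFactors, f p) * ∏ p ∈ r.primeFactors, ν p / ((p : ℝ) - ν p))
      = (r : ℝ) / ∏ p ∈ r.primeFactors, ((p : ℝ) - 1) := by
    rw [← Finset.prod_mul_distrib, ← Finset.prod_mul_distrib]
    have : ∀ p ∈ r.primeFactors,
        ((p : ℝ) - ν p) / (ν p - 1) * (f p * (ν p / ((p : ℝ) - ν p)))
          = (p : ℝ) / ((p : ℝ) - 1) := by
      intro p hp
      have hpp := Nat.prime_of_mem_primeFactors hp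
      obtain ⟨hpP, hν2⟩ := hrP p hpp (Nat.dvd_of_mem_primeFactors hp)
      have hνlt := (hν p hpP).2
      have h2p : (2 : ℝ) ≤ (p : ℝ) := by exact_mod_cast hpp.two_le
      have hν1 : ν p - 1 ≠ 0 := by nlinarith
      have hν0 : ν p ≠ 0 := by nlinarith
      have hpν : (p : ℝ) - ν p ≠ 0 := by nlinarith
      have hp1 : (p : ℝ) - 1 ≠ 0 := by nlinarith
      simp only [hf]
      field_simp
    rw [Finset.prod_congr rfl this, Finset.prod_div_distrib]
    congr 1
    rw [← Nat.cast_prod, Nat.prod_primeFactors_of_squarefree hr]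
  have key2 : (∏ p ∈ s.primeFactors \ r.primeFactors, (1 - f p)) *
      (∏ p ∈ s.primeFactors \ r.primeFactors, ν p / ((p : ℝ) - ν p))
      = 1 / ∏ p ∈ s.primeFactors \ r.primeFactors, ((p : ℝ) - 1) := by
    rw [← Finset.prod_mul_distrib]
    have : ∀ p ∈ s.primeFactors \ r.primeFactors,
        (1 - f p) * (ν p / ((p : ℝ) - ν p)) = 1 / ((p : ℝ) - 1) := by
      intro p hp
      have hp' := Finset.mem_sdiff.mp hp
      have hpp := Nat.prime_of_mem_primeFactors hp'.1
      have hpP : p ∈ P := hsP p hpp (Nat.dvd_of_mem_primeFactors hp'.1)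
      have hν1 := (hν p hpP).1
      have hνlt := (hν p hpP).2
      have h2p : (2 : ℝ) ≤ (p : ℝ) := by exact_mod_cast hpp.two_le
      have hν0 : ν p ≠ 0 := by nlinarith
      have hpν : (p : ℝ) - ν p ≠ 0 := by nlinarith
      have hp1 : (p : ℝ) - 1 ≠ 0 := by nlinarith
      simp only [hf]
      field_simp
      ring
    rw [Finset.prod_congr rfl this, Finset.prod_div_distrib, Finset.prod_const_one]
  have hφ : (Nat.totient s : ℝ)
      = (∏ p ∈ s.primeFactors \ r.primeFactors, ((p : ℝ) - 1)) *
        ∏ p ∈ r.primeFactors, ((p : ℝ) - 1) := by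
    rw [gpy_tot hsf, ← Finset.prod_sdiff hsub]
  have hne1 : ∏ p ∈ r.primeFactors, ((p : ℝ) - 1) ≠ 0 := by
    refine Finset.prod_ne_zero_iff.mpr fun p hp => ?_
    have h2p : (2 : ℝ) ≤ (p : ℝ) := by
      exact_mod_cast (Nat.prime_of_mem_primeFactors hp).two_le
    nlinarith
  have hne2 : ∏ p ∈ s.primeFactors \ r.primeFactors, ((p : ℝ) - 1) ≠ 0 := by
    refine Finset.prod_ne_zero_iff.mpr fun p hp => ?_
    have h2p : (2 : ℝ) ≤ (p : ℝ) := by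
      exact_mod_cast (Nat.prime_of_mem_primeFactors (Finset.mem_sdiff.mp hp).1).two_le
    nlinarith
  calc (μ r : ℝ) * (∏ p ∈ r.primeFactors, ((p : ℝ) - ν p) / (ν p - 1)) *
        (((μ r : ℝ) * (∏ p ∈ r.primeFactors, f p) *
          ∏ p ∈ s.primeFactors \ r.primeFactors, (1 - f p)) * F s)
      = ((μ r : ℝ) * (μ r : ℝ)) *
        ((∏ p ∈ r.primeFactors, ((p : ℝ) - ν p) / (ν p - 1)) *
          ((∏ p ∈ r.primeFactors, f p) * ∏ p ∈ r.primeFactors, ν p / ((p : ℝ) - ν p))) *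
        ((∏ p ∈ s.primeFactors \ r.primeFactors, (1 - f p)) *
          (∏ p ∈ s.primeFactors \ r.primeFactors, ν p / ((p : ℝ) - ν p))) * y s := by
        simp only [hF]
        rw [hsplit]
        ring
    _ = (r : ℝ) * (y s / (Nat.totient s : ℝ)) := by
        rw [hμ, key1, key2, hφ, one_mul]
        rw [mul_comm (∏ p ∈ s.primeFactors \ r.primeFactors, ((p : ℝ) - 1))
          (∏ p ∈ r.primeFactors, ((p : ℝ) - 1))]
        rw [div_mul_div_comm, mul_one, div_mul_eq_mul_div, mul_div_assoc]
end
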